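/- Let G be a finite group whose central quotient G/Z(G) is isomorphic to ℤ_p × ℤ_p for a prime p. Then the commuting graph Γ_G is a disjoint union of p + 1 complete graphs each on (p − 1)·|Z(G)| vertices; that is, Γ_G has exactly p + 1 connected components, every connected component is a clique, and each component has exactly (p − 1)·|Z(G)| vertices. -/

import Mathlib

section Helpers

variable {p : ℕ} {G : Type*} [Group G] [Finite G]

open Subgroup

/-- If `x` is non-central and `G⧸Z(G)` has `p²` elements (`p` prime),
the centralizer of `x` has image of order `p` in the quotient. -/
lemma card_map_centralizer (hp : p.Prime)
    (hcard : Nat.card (G ⧸ center G) = p * p) {x : G} (hx : x ∉ center G) :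
    Nat.card (Subgroup.map (QuotientGroup.mk' (center G)) (centralizer {x})) = p := by
  set π := QuotientGroup.mk' (center G)
  set C := centralizer ({x} : Set G)
  set M := Subgroup.map π C
  have hxC : x ∈ C := by
    rw [Subgroup.mem_centralizer_iff]; rintro h rfl; rfl
  have hdvd : Nat.card M ∣ p * p := by
    rw [← hcard]; exact Subgroup.card_subgroup_dvd_card M
  rw [← pow_two] at hdvd
  obtain ⟨i, hi, hMi⟩ := (Nat.dvd_prime_pow hp).mp hdvd
  interval_cases i
  · -- card = 1 impossible: π x ∈ M is nontrivial
    exfalso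
    have h1 : π x ∈ M := ⟨x, hxC, rfl⟩
    have hne : π x ≠ 1 := by
      simpa [π, QuotientGroup.mk'_apply, QuotientGroup.eq_one_iff] using hx
    have : Nat.card M = 1 := by simpa using hMi
    have := Subgroup.eq_bot_of_card_eq M this
    rw [this] at h1
    exact hne h1
  · simpa using hMi
  · -- card = p² impossible: then C = ⊤, so x central
    exfalso
    have : Nat.card M = Nat.card (G ⧸ center G) := by rw [hcard, hMi]; ring
    have hMtop : M = ⊤ := Subgroup.eq_top_of_card_eq M this
    have hCtop : C = ⊤ := by
      have hker : π.ker = center G := QuotientGroup.ker_mk' _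
      have hle : π.ker ≤ C := by rw [hker]; exact Subgroup.center_le_centralizer _
      have h2 := Subgroup.comap_map_eq π C
      rw [(show Subgroup.map π C = ⊤ from hMtop), Subgroup.comap_top, sup_of_le_left hle] at h2
      exact h2.symm
    apply hx
    rw [Subgroup.mem_center_iff]
    intro g
    have : g ∈ C := hCtop ▸ Subgroup.mem_top g
    exact (Subgroup.mem_centralizer_iff.mp this x rfl).symm

/-- The centralizer of a non-central element is commutative. -/
lemma centralizer_comm (hp : p.Prime)
    (hcard : Nat.card (G ⧸ center G) = p * p) {x : G} (hx : x ∉ center G)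
    {a b : G} (ha : a ∈ centralizer ({x} : Set G)) (hb : b ∈ centralizer ({x} : Set G)) :
    a * b = b * a := by
  haveI : Fact p.Prime := ⟨hp⟩
  set π := QuotientGroup.mk' (center G)
  set C := centralizer ({x} : Set G)
  set f : C →* G ⧸ center G := π.comp C.subtype
  have hrange : f.range = Subgroup.map π C := by
    rw [MonoidHom.range_comp, Subgroup.range_subtype]
  have hcyc : IsCyclic f.range := by
    apply isCyclic_of_prime_card (p := p)
    rw [hrange]
    exact card_map_centralizer hp hcard hx
  have hker : f.rangeRestrict.ker ≤ center C := by
    rw [MonoidHom.ker_rangeRestrict]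
    intro a haker
    have haZ : (a : G) ∈ center G := by
      have : π (a : G) = 1 := haker
      simpa [π, QuotientGroup.mk'_apply, QuotientGroup.eq_one_iff] using this
    rw [Subgroup.mem_center_iff]
    intro g
    ext
    exact (Subgroup.mem_center_iff.mp haZ (g : G))
  have := commutative_of_cyclic_center_quotient f.rangeRestrict hker ⟨a, ha⟩ ⟨b, hb⟩
  exact congrArg Subtype.val this

lemma card_centralizer (hp : p.Prime)
    (hcard : Nat.card (G ⧸ center G) = p * p) {x : G} (hx : x ∉ center G) :
    Nat.card (centralizer ({x} : Set G)) = p * Nat.card (center G) := by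
  set π := QuotientGroup.mk' (center G)
  set C := centralizer ({x} : Set G)
  set f : C →* G ⧸ center G := π.comp C.subtype
  have hrange : f.range = Subgroup.map π C := by
    rw [MonoidHom.range_comp, Subgroup.range_subtype]
  have hkerf : f.ker = (center G).subgroupOf C := by
    ext a
    simp [f, MonoidHom.mem_ker, π, QuotientGroup.mk'_apply, QuotientGroup.eq_one_iff,
      Subgroup.mem_subgroupOf]
  have h1 : Nat.card C = Nat.card (C ⧸ f.ker) * Nat.card f.ker :=
    Subgroup.card_eq_card_quotient_mul_card_subgroup f.ker
  have h2 : Nat.card (C ⧸ f.ker) = p := by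
    have heq := Nat.card_congr (QuotientGroup.quotientKerEquivRange f).toEquiv
    rw [heq, hrange]
    exact card_map_centralizer hp hcard hx
  have h3 : Nat.card f.ker = Nat.card (center G) := by
    rw [hkerf]
    exact Nat.card_congr
      (Subgroup.subgroupOfEquivOfLe (Subgroup.center_le_centralizer _)).toEquiv
  rw [h1, h2, h3]

end Helpers

/-- The commuting graph of a group `G`: vertices are the non-central elements,
two distinct vertices are adjacent iff they commute. -/
def commutingGraph (G : Type*) [Group G] : SimpleGraph {x : G // x ∉ Subgroup.center G} where
  Adj x y := x ≠ y ∧ (x : G) * y = (y : G) * x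
  symm := ⟨by rintro x y ⟨hne, hc⟩; exact ⟨hne.symm, hc.symm⟩⟩
  loopless := ⟨by rintro x ⟨hne, _⟩; exact hne rfl⟩

theorem commuting_graph_disjoint_cliques_of_central_quotient_p_p
    (p : ℕ) (hp : p.Prime) (G : Type*) [Group G] [Finite G]
    (hZ : Nonempty ((G ⧸ Subgroup.center G) ≃* (ZMod p × ZMod p))) :
    Nat.card (commutingGraph G).ConnectedComponent = p + 1 ∧
      (∀ x y : {x : G // x ∉ Subgroup.center G},
        (commutingGraph G).Reachable x y → x = y ∨ (commutingGraph G).Adj x y) ∧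
      ∀ c : (commutingGraph G).ConnectedComponent,
        Nat.card {x : {x : G // x ∉ Subgroup.center G} //
            (commutingGraph G).connectedComponentMk x = c} =
          (p - 1) * Nat.card (Subgroup.center G) := by
  classical
  obtain ⟨e⟩ := hZ
  haveI : Fact p.Prime := ⟨hp⟩
  have hppos : 0 < p := hp.pos
  have hcard : Nat.card (G ⧸ Subgroup.center G) = p * p := by
    rw [Nat.card_congr e.toEquiv]
    simp [Nat.card_eq_fintype_card]
  -- commuting (as group elements) is transitive through non-central elements
  have key : ∀ x y z : G, y ∉ Subgroup.center G →
      x * y = y * x → y * z = z * y → x * z = z * x := by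
    intro x y z hy hxy hyz
    exact centralizer_comm hp hcard hy
      (Subgroup.mem_centralizer_iff.mpr (by rintro h rfl; exact hxy.symm))
      (Subgroup.mem_centralizer_iff.mpr (by rintro h rfl; exact hyz))
  -- reachable implies commuting
  have reach_comm : ∀ x y : {x : G // x ∉ Subgroup.center G},
      (commutingGraph G).Reachable x y → (x : G) * y = (y : G) * x := by
    intro x y hr
    obtain ⟨w⟩ := hr
    induction w with
    | nil => rfl
    | cons h w ih =>
      rename_i a b c
      exact key _ _ _ b.2 h.2 ih
  have clique : ∀ x y : {x : G // x ∉ Subgroup.center G},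
      (commutingGraph G).Reachable x y → x = y ∨ (commutingGraph G).Adj x y := by
    intro x y hr
    by_cases hxy : x = y
    · exact Or.inl hxy
    · exact Or.inr ⟨hxy, reach_comm x y hr⟩
  -- characterize components: same component ↔ commute
  have comp_iff : ∀ x y : {x : G // x ∉ Subgroup.center G},
      (commutingGraph G).connectedComponentMk x = (commutingGraph G).connectedComponentMk y ↔
        (x : G) * y = (y : G) * x := by
    intro x y
    rw [SimpleGraph.ConnectedComponent.eq]
    constructor
    · exact reach_comm x y
    · intro hc
      by_cases hxy : x = y
      · exact hxy ▸ SimpleGraph.Reachable.refl x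
      · exact SimpleGraph.Adj.reachable ⟨hxy, hc⟩
  -- each component has (p-1)|Z| vertices
  have comp_card : ∀ c : (commutingGraph G).ConnectedComponent,
      Nat.card {x : {x : G // x ∉ Subgroup.center G} //
          (commutingGraph G).connectedComponentMk x = c} =
        (p - 1) * Nat.card (Subgroup.center G) := by
    intro c
    induction c using SimpleGraph.ConnectedComponent.ind with
    | _ x => ?_
    set C := Subgroup.centralizer ({(x : G)} : Set G)
    have hequiv : {y : {x : G // x ∉ Subgroup.center G} //
        (commutingGraph G).connectedComponentMk y = (commutingGraph G).connectedComponentMk x} ≃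
        {y : C // (y : G) ∉ Subgroup.center G} := by
      refine ⟨fun y => ⟨⟨(y : G), ?_⟩, y.1.2⟩, fun y => ⟨⟨(y : G), y.2⟩, ?_⟩, ?_, ?_⟩
      · rw [Subgroup.mem_centralizer_iff]
        rintro h rfl
        exact ((comp_iff _ _).mp y.2).symm
      · rw [comp_iff]
        exact (Subgroup.mem_centralizer_iff.mp y.1.2 (x : G) rfl).symm
      · intro y; rfl
      · intro y; rfl
    rw [Nat.card_congr hequiv]
    haveI : Fintype G := Fintype.ofFinite G
    haveI : Fintype C := Fintype.ofFinite C
    have hcompl : Nat.card {y : C // (y : G) ∉ Subgroup.center G} =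
        Nat.card C - Nat.card {y : C // (y : G) ∈ Subgroup.center G} := by
      simp only [Nat.card_eq_fintype_card]
      exact Fintype.card_subtype_compl _
    have hZC : Nat.card {y : C // (y : G) ∈ Subgroup.center G} =
        Nat.card (Subgroup.center G) := by
      have : {y : C // (y : G) ∈ Subgroup.center G} ≃ (Subgroup.center G).subgroupOf C := by
        refine ⟨fun y => ⟨y.1, y.2⟩, fun y => ⟨y.1, y.2⟩, fun y => rfl, fun y => rfl⟩
      rw [Nat.card_congr this]
      exact Nat.card_congr
        (Subgroup.subgroupOfEquivOfLe (Subgroup.center_le_centralizer _)).toEquiv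
    rw [hcompl, hZC, card_centralizer hp hcard x.2, Nat.sub_one_mul]
  refine ⟨?_, clique, comp_card⟩
  -- counting components
  haveI : Fintype G := Fintype.ofFinite G
  have hGcard : Nat.card G = p * p * Nat.card (Subgroup.center G) := by
    rw [Subgroup.card_eq_card_quotient_mul_card_subgroup (Subgroup.center G), hcard]
  have hVcard : Nat.card {x : G // x ∉ Subgroup.center G} =
      (p * p - 1) * Nat.card (Subgroup.center G) := by
    have h1 : Nat.card {x : G // x ∉ Subgroup.center G} =
        Nat.card G - Nat.card (Subgroup.center G) := by
      simp only [Nat.card_eq_fintype_card]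
      exact Fintype.card_subtype_compl _
    rw [h1, hGcard, Nat.sub_one_mul]
  have hsigma : Nat.card {x : G // x ∉ Subgroup.center G} =
      Nat.card (commutingGraph G).ConnectedComponent *
        ((p - 1) * Nat.card (Subgroup.center G)) := by
    haveI : Fintype {x : G // x ∉ Subgroup.center G} := Fintype.ofFinite _
    haveI : Fintype (commutingGraph G).ConnectedComponent := Fintype.ofFinite _
    haveI : ∀ c : (commutingGraph G).ConnectedComponent,
        Fintype {x : {x : G // x ∉ Subgroup.center G} //
          (commutingGraph G).connectedComponentMk x = c} := fun c => Fintype.ofFinite _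
    calc Nat.card {x : G // x ∉ Subgroup.center G}
        = Nat.card (Σ c : (commutingGraph G).ConnectedComponent,
            {x : {x : G // x ∉ Subgroup.center G} //
              (commutingGraph G).connectedComponentMk x = c}) :=
          (Nat.card_congr (Equiv.sigmaFiberEquiv _)).symm
      _ = ∑ c : (commutingGraph G).ConnectedComponent,
            Fintype.card {x : {x : G // x ∉ Subgroup.center G} //
              (commutingGraph G).connectedComponentMk x = c} := by
          rw [Nat.card_eq_fintype_card]; exact Fintype.card_sigma
      _ = ∑ _c : (commutingGraph G).ConnectedComponent,
            (p - 1) * Nat.card (Subgroup.center G) := by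
          refine Finset.sum_congr rfl fun c _ => ?_
          rw [← Nat.card_eq_fintype_card]; exact comp_card c
      _ = Nat.card (commutingGraph G).ConnectedComponent *
            ((p - 1) * Nat.card (Subgroup.center G)) := by
          rw [Finset.sum_const, Finset.card_univ, smul_eq_mul]
          simp [Nat.card_eq_fintype_card]
  have hZpos : 0 < Nat.card (Subgroup.center G) := Nat.card_pos
  have hfactor : p * p - 1 = (p + 1) * (p - 1) := by
    cases p with
    | zero => exact absurd hppos (by simp)
    | succ q => simp [Nat.succ_sub_one]; ring_nf; omega
  rw [hVcard, hfactor, mul_assoc] at hsigma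
  have hpos : 0 < (p - 1) * Nat.card (Subgroup.center G) := by
    apply Nat.mul_pos _ hZpos
    have := hp.two_le
    omega
  exact Nat.eq_of_mul_eq_mul_right hpos (hsigma.symm)
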